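/- (Theorem 2) Let n ≥ p, X full column rank, N = diag(√((XᵀX)⁻¹_{jj})), and F_N the Puffer transform of XN. Let β̂^N(λ) be the Lasso solution for data (F_N X N, F_N Y) with penalty λ‖b‖₁ (so coordinates are t_{λ/2}(σZ_j/√n) where Z_j = √n β̂_j^OLS/(σ√((XᵀX)⁻¹_{jj}))). Then β̂_j^N(λ) ≠ 0 if and only if |Z_j| > λ√n/(2σ). -/

import Mathlib

open Matrix BigOperators

/-- Scalar soft-thresholding characterization. -/
lemma scalar_soft_threshold (w lam m : ℝ) (hlam : 0 ≤ lam)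
    (hmin : ∀ t : ℝ, m ^ 2 - 2 * w * m + lam * |m| ≤ t ^ 2 - 2 * w * t + lam * |t|) :
    m ≠ 0 ↔ |w| > lam / 2 := by
  have key : |w| ≤ lam / 2 → m = 0 := by
    intro hw
    have h0 := hmin 0
    simp only [abs_zero] at h0
    have h1 : w * m ≤ |w| * |m| := (le_abs_self _).trans (le_of_eq (abs_mul w m))
    have h2 : (0:ℝ) ≤ |m| := abs_nonneg m
    have hm2 : m ^ 2 ≤ 0 := by nlinarith [abs_le_abs (le_refl m)]
    nlinarith [sq_nonneg m, sq_abs m, abs_nonneg m, hm2]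
  constructor
  · intro hm
    by_contra hw
    exact hm (key (not_lt.mp hw))
  · intro hw hm
    rcases le_or_gt 0 w with h | h
    · have hε : 0 < w - lam / 2 := by rw [abs_of_nonneg h] at hw; linarith
      have h0 := hmin (w - lam / 2)
      rw [hm] at h0
      rw [abs_of_pos hε] at h0
      simp only [abs_zero] at h0
      nlinarith
    · have hε : 0 < -w - lam / 2 := by rw [abs_of_neg h] at hw; linarith
      have h0 := hmin (-(-w - lam / 2))
      rw [hm] at h0
      rw [abs_neg, abs_of_pos hε] at h0
      simp only [abs_zero] at h0
      nlinarith

theorem preconditioned_lasso_selects_by_test_statistic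
    {n p : ℕ} (hnp : p ≤ n)
    (X : Matrix (Fin n) (Fin p) ℝ) (hX : (Xᵀ * X).PosDef)
    (N : Matrix (Fin p) (Fin p) ℝ)
    (hN : N = Matrix.diagonal (fun j => Real.sqrt ((Xᵀ * X)⁻¹ j j)))
    -- skinny SVD of X N:
    (UN : Matrix (Fin n) (Fin p) ℝ) (VN : Matrix (Fin p) (Fin p) ℝ)
    (dN : Fin p → ℝ) (hdN : ∀ i, 0 < dN i)
    (hUN : UNᵀ * UN = 1) (hVN : VNᵀ * VN = 1) (hVN' : VN * VNᵀ = 1)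
    (hXN : X * N = UN * Matrix.diagonal dN * VNᵀ)
    (FN : Matrix (Fin n) (Fin n) ℝ)
    (hFN : FN = UN * Matrix.diagonal (fun i => (dN i)⁻¹) * UNᵀ)
    (Y : Fin n → ℝ) (lam : ℝ) (hlam : 0 ≤ lam)
    (sigma : ℝ) (hsigma : 0 < sigma)
    (Z : Fin p → ℝ)
    (hZ : Z = fun j => Real.sqrt n * (Xᵀ * X)⁻¹.mulVec (Xᵀ.mulVec Y) j
        / (sigma * Real.sqrt ((Xᵀ * X)⁻¹ j j)))
    (betaN : Fin p → ℝ)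
    (hbetaN : ∀ b : Fin p → ℝ,
      ∑ i, (FN.mulVec Y i - (FN * (X * N)).mulVec betaN i) ^ 2
          + lam * ∑ j, |betaN j|
        ≤ ∑ i, (FN.mulVec Y i - (FN * (X * N)).mulVec b i) ^ 2
          + lam * ∑ j, |b j|) :
    ∀ j : Fin p, betaN j ≠ 0 ↔ |Z j| > lam * Real.sqrt n / (2 * sigma) := by
  intro j
  have hp : 0 < p := j.pos
  have hn : 0 < n := lt_of_lt_of_le hp hnp
  have hsqn : 0 < Real.sqrt n := Real.sqrt_pos.mpr (by exact_mod_cast hn)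
  -- positivity of diagonal entries of (XᵀX)⁻¹
  have hinvPD : (Xᵀ * X)⁻¹.PosDef := hX.inv
  have hdiag : ∀ k, 0 < (Xᵀ * X)⁻¹ k k := by
    intro k
    exact hinvPD.diag_pos
  have hNk : ∀ k, 0 < N k k := by
    intro k
    rw [hN, Matrix.diagonal_apply_eq]
    exact Real.sqrt_pos.mpr (hdiag k)
  have hNPD : N.PosDef := by
    rw [hN]; exact Matrix.PosDef.diagonal (fun k => Real.sqrt_pos.mpr (hdiag k))
  -- diagonal helpers
  have hDiD : Matrix.diagonal (fun i => (dN i)⁻¹) * Matrix.diagonal dN = (1 : Matrix (Fin p) (Fin p) ℝ) := by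
    rw [Matrix.diagonal_mul_diagonal]
    have : (fun i => (dN i)⁻¹ * dN i) = fun _ => (1:ℝ) :=
      funext fun i => inv_mul_cancel₀ (hdN i).ne'
    rw [this, Matrix.diagonal_one]
  -- A := FN * (X * N) = UN * VNᵀ
  have hA : FN * (X * N) = UN * VNᵀ := by
    rw [hFN, hXN]
    simp only [Matrix.mul_assoc]
    rw [← Matrix.mul_assoc UNᵀ UN, hUN, Matrix.one_mul,
      ← Matrix.mul_assoc (Matrix.diagonal fun i => (dN i)⁻¹) (Matrix.diagonal dN), hDiD,
      Matrix.one_mul]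
  have hAtA : (UN * VNᵀ)ᵀ * (UN * VNᵀ) = (1 : Matrix (Fin p) (Fin p) ℝ) := by
    rw [Matrix.transpose_mul, Matrix.transpose_transpose]
    simp only [Matrix.mul_assoc]
    rw [← Matrix.mul_assoc UNᵀ UN, hUN, Matrix.one_mul, hVN']
  -- the vector w
  set M : Matrix (Fin p) (Fin n) ℝ := VN * Matrix.diagonal (fun i => (dN i)⁻¹) * UNᵀ with hM
  set w : Fin p → ℝ := M.mulVec Y with hw
  have hAF : (UN * VNᵀ)ᵀ * FN = M := by
    rw [hFN, Matrix.transpose_mul, Matrix.transpose_transpose, hM]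
    simp only [Matrix.mul_assoc]
    rw [← Matrix.mul_assoc UNᵀ UN, hUN, Matrix.one_mul]
  -- quadratic expansion
  have expand : ∀ b : Fin p → ℝ,
      ∑ i, (FN.mulVec Y i - (UN * VNᵀ).mulVec b i) ^ 2
        = (∑ i, (FN.mulVec Y i) ^ 2) - 2 * (w ⬝ᵥ b) + (∑ k, (b k) ^ 2) := by
    intro b
    have h1 : ∑ i, (FN.mulVec Y i - (UN * VNᵀ).mulVec b i) ^ 2
        = (∑ i, (FN.mulVec Y i) ^ 2)
          - 2 * (FN.mulVec Y ⬝ᵥ (UN * VNᵀ).mulVec b)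
          + ((UN * VNᵀ).mulVec b ⬝ᵥ (UN * VNᵀ).mulVec b) := by
      simp only [dotProduct, Finset.mul_sum, ← Finset.sum_sub_distrib, ← Finset.sum_add_distrib]
      apply Finset.sum_congr rfl
      intro i _
      ring
    have h2 : FN.mulVec Y ⬝ᵥ (UN * VNᵀ).mulVec b = w ⬝ᵥ b := by
      rw [Matrix.dotProduct_mulVec, ← Matrix.mulVec_transpose, Matrix.mulVec_mulVec, hAF]
    have h3 : (UN * VNᵀ).mulVec b ⬝ᵥ (UN * VNᵀ).mulVec b = ∑ k, (b k) ^ 2 := by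
      rw [Matrix.dotProduct_mulVec, ← Matrix.mulVec_transpose, Matrix.mulVec_mulVec, hAtA,
        Matrix.one_mulVec]
      simp [dotProduct, sq]
    rw [h1, h2, h3]
  -- coordinatewise minimality
  have hcoord : ∀ t : ℝ, (betaN j) ^ 2 - 2 * (w j) * (betaN j) + lam * |betaN j|
      ≤ t ^ 2 - 2 * (w j) * t + lam * |t| := by
    intro t
    have hb := hbetaN (Function.update betaN j t)
    rw [hA, expand betaN, expand (Function.update betaN j t)] at hb
    have e1 : ∀ v : Fin p → ℝ,
        ∑ k, ((v k) ^ 2 - 2 * (w k) * (v k) + lam * |v k|)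
          = (∑ k, (v k) ^ 2) - 2 * (w ⬝ᵥ v) + lam * ∑ k, |v k| := by
      intro v
      simp only [dotProduct, Finset.mul_sum, ← Finset.sum_sub_distrib, ← Finset.sum_add_distrib]
      apply Finset.sum_congr rfl
      intro k _
      ring
    have key : ∑ k, ((betaN k) ^ 2 - 2 * (w k) * (betaN k) + lam * |betaN k|)
        ≤ ∑ k, ((Function.update betaN j t k) ^ 2
            - 2 * (w k) * (Function.update betaN j t k) + lam * |Function.update betaN j t k|) := by
      rw [e1, e1]
      linarith
    have split : ∀ v : Fin p → ℝ,
        ∑ k, ((v k) ^ 2 - 2 * (w k) * (v k) + lam * |v k|)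
          = (∑ k ∈ Finset.univ.erase j, ((v k) ^ 2 - 2 * (w k) * (v k) + lam * |v k|))
            + ((v j) ^ 2 - 2 * (w j) * (v j) + lam * |v j|) :=
      fun v => (Finset.sum_erase_add _ _ (Finset.mem_univ j)).symm
    rw [split betaN, split (Function.update betaN j t)] at key
    have herase : ∑ k ∈ Finset.univ.erase j,
        ((Function.update betaN j t k) ^ 2 - 2 * (w k) * (Function.update betaN j t k)
          + lam * |Function.update betaN j t k|)
        = ∑ k ∈ Finset.univ.erase j, ((betaN k) ^ 2 - 2 * (w k) * (betaN k) + lam * |betaN k|) := by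
      apply Finset.sum_congr rfl
      intro k hk
      rw [Function.update_of_ne (Finset.ne_of_mem_erase hk)]
    rw [herase, Function.update_self] at key
    linarith
  have hiff := scalar_soft_threshold (w j) lam (betaN j) hlam hcoord
  -- identify w j with σ Z j / √n
  have hXtXunit : IsUnit (Xᵀ * X).det := hX.det_pos.ne'.isUnit
  have hNunit : IsUnit N.det := hNPD.det_pos.ne'.isUnit
  have hNt : Nᵀ = N := by rw [hN, Matrix.diagonal_transpose]
  have hstep : N * ((Xᵀ * X) * (N * M)) = N * Xᵀ := by
    have lhs1 : N * ((Xᵀ * X) * (N * M)) = ((X * N)ᵀ * (X * N)) * M := by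
      rw [Matrix.transpose_mul, hNt]
      simp only [Matrix.mul_assoc]
    have rhs1 : N * Xᵀ = (X * N)ᵀ := by rw [Matrix.transpose_mul, hNt]
    rw [lhs1, rhs1, hXN, hM]
    rw [Matrix.transpose_mul, Matrix.transpose_mul, Matrix.transpose_transpose,
      Matrix.diagonal_transpose]
    simp only [Matrix.mul_assoc]
    rw [← Matrix.mul_assoc UNᵀ UN, hUN, Matrix.one_mul]
    rw [← Matrix.mul_assoc VNᵀ VN, hVN, Matrix.one_mul]
    rw [← Matrix.mul_assoc (Matrix.diagonal dN) (Matrix.diagonal fun i => (dN i)⁻¹), ]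
    rw [Matrix.diagonal_mul_diagonal]
    have : (fun i => dN i * (dN i)⁻¹) = fun _ => (1:ℝ) :=
      funext fun i => mul_inv_cancel₀ (hdN i).ne'
    rw [this, Matrix.diagonal_one, Matrix.one_mul]
  have hkey : (Xᵀ * X) * (N * M) = Xᵀ := by
    have := congrArg (fun P => N⁻¹ * P) hstep
    simpa only [← Matrix.mul_assoc, Matrix.nonsing_inv_mul N hNunit, Matrix.one_mul] using this
  have hid : (Xᵀ * X)⁻¹ * Xᵀ = N * M := by
    have := congrArg (fun P => (Xᵀ * X)⁻¹ * P) hkey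
    rw [← Matrix.mul_assoc, Matrix.nonsing_inv_mul _ hXtXunit, Matrix.one_mul] at this
    exact this.symm
  have hwZ : Z j = Real.sqrt n * w j / sigma := by
    rw [hZ]
    simp only
    have : (Xᵀ * X)⁻¹.mulVec (Xᵀ.mulVec Y) = N.mulVec w := by
      rw [Matrix.mulVec_mulVec, hid, hw, ← Matrix.mulVec_mulVec]
    rw [this]
    have hNw : N.mulVec w j = Real.sqrt ((Xᵀ * X)⁻¹ j j) * w j := by
      rw [hN, Matrix.mulVec_diagonal]
    rw [hNw]
    have hs : Real.sqrt ((Xᵀ * X)⁻¹ j j) ≠ 0 := (Real.sqrt_pos.mpr (hdiag j)).ne'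
    have hre : Real.sqrt ↑n * (Real.sqrt ((Xᵀ * X)⁻¹ j j) * w j)
          / (sigma * Real.sqrt ((Xᵀ * X)⁻¹ j j))
        = Real.sqrt ((Xᵀ * X)⁻¹ j j) * (Real.sqrt ↑n * w j)
          / (Real.sqrt ((Xᵀ * X)⁻¹ j j) * sigma) := by ring_nf
    rw [hre, mul_div_mul_left _ _ hs]
  -- final equivalence
  rw [hiff, hwZ]
  have habs : |Real.sqrt n * w j / sigma| = Real.sqrt n / sigma * |w j| := by
    rw [abs_div, abs_mul, abs_of_pos hsqn, abs_of_pos hsigma]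
    ring
  rw [habs]
  have hrhs : lam * Real.sqrt n / (2 * sigma) = Real.sqrt n / sigma * (lam / 2) := by
    field_simp
  rw [hrhs]
  have hpos : 0 < Real.sqrt n / sigma := by positivity
  constructor
  · intro h
    exact (mul_lt_mul_iff_right₀ hpos).mpr h
  · intro h
    exact (mul_lt_mul_iff_right₀ hpos).mp h
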